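/- For the logistic map with r = 4, the probability density ρ(x) = 1/(π·√(x(1−x))) on (0,1) is invariant: for every interval [c,d] ⊆ [0,1], ∫_{L⁻¹([c,d])} ρ(x) dx = ∫_c^d ρ(x) dx, where L(x) = 4x(1−x). -/

import Mathlib

open Real MeasureTheory Set

private lemma arcsin_one_sub_two_sq {u : ℝ} (h0 : 0 ≤ u) (h1 : u ≤ 1) :
    Real.arcsin (1 - 2 * u ^ 2) = π / 2 - 2 * Real.arcsin u := by
  have hs : Real.sin (π / 2 - 2 * Real.arcsin u) = 1 - 2 * u ^ 2 := by
    rw [Real.sin_pi_div_two_sub, Real.cos_two_mul']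
    have h2 : Real.sin (Real.arcsin u) = u := Real.sin_arcsin (by linarith) h1
    have h3 := Real.sin_sq_add_cos_sq (Real.arcsin u)
    nlinarith
  rw [← hs, Real.arcsin_sin] <;>
  · have h4 : 0 ≤ Real.arcsin u := Real.arcsin_nonneg.2 h0
    have h5 : Real.arcsin u ≤ π / 2 := Real.arcsin_le_pi_div_two u
    linarith

private lemma rho_cont {a b : ℝ} :
    ContinuousOn (fun x : ℝ => Real.arcsin (2 * x - 1) / π) (Set.Icc a b) :=
  ((Real.continuous_arcsin.comp (by continuity)).div_const _).continuousOn

private lemma rho_deriv {a b : ℝ} (ha : 0 ≤ a) (hb : b ≤ 1) : ∀ x ∈ Set.Ioo a b,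
    HasDerivAt (fun x : ℝ => Real.arcsin (2 * x - 1) / π)
      (1 / (Real.pi * Real.sqrt (x * (1 - x)))) x := by
  intro x hx
  have hx0 : 0 < x := lt_of_le_of_lt ha hx.1
  have hx1 : x < 1 := lt_of_lt_of_le hx.2 hb
  have h₁ : (2 * x - 1 : ℝ) ≠ -1 := by intro h; nlinarith
  have h₂ : (2 * x - 1 : ℝ) ≠ 1 := by intro h; nlinarith
  have hA := Real.hasDerivAt_arcsin h₁ h₂
  have hB : HasDerivAt (fun x : ℝ => 2 * x - 1) 2 x := by
    simpa using ((hasDerivAt_id x).const_mul 2).sub_const 1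
  have hC := (hA.comp x hB).div_const π
  refine HasDerivAt.congr_deriv hC ?_
  have hsq : 1 - (2 * x - 1) ^ 2 = 4 * (x * (1 - x)) := by ring
  rw [hsq, show (4 : ℝ) = 2 ^ 2 by norm_num, Real.sqrt_mul (by positivity : (0:ℝ) ≤ 2 ^ 2),
    Real.sqrt_sq (by norm_num : (0:ℝ) ≤ 2), Real.sqrt_mul hx0.le]
  have hp1 : (0:ℝ) < Real.sqrt x := Real.sqrt_pos.2 hx0
  have hp2 : (0:ℝ) < Real.sqrt (1 - x) := Real.sqrt_pos.2 (by linarith)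
  have hpi := Real.pi_pos
  field_simp

private lemma rho_integrableOn {a b : ℝ} (ha : 0 ≤ a) (hab : a ≤ b) (hb : b ≤ 1) :
    IntegrableOn (fun x => 1 / (Real.pi * Real.sqrt (x * (1 - x))))
      (Set.Icc a b) volume := by
  rw [integrableOn_Icc_iff_integrableOn_Ioc]
  exact intervalIntegral.integrableOn_deriv_of_nonneg rho_cont (rho_deriv ha hb)
    (fun x hx => by positivity)

private lemma icc_integral {a b : ℝ} (ha : 0 ≤ a) (hab : a ≤ b) (hb : b ≤ 1) :
    ∫ x in Set.Icc a b, 1 / (Real.pi * Real.sqrt (x * (1 - x))) =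
      (Real.arcsin (2 * b - 1) - Real.arcsin (2 * a - 1)) / π := by
  have hint : IntervalIntegrable (fun x => 1 / (Real.pi * Real.sqrt (x * (1 - x))))
      volume a b := by
    apply MeasureTheory.IntegrableOn.intervalIntegrable
    rw [Set.uIcc_of_le hab]
    exact rho_integrableOn ha hab hb
  rw [MeasureTheory.integral_Icc_eq_integral_Ioc,
    ← intervalIntegral.integral_of_le hab,
    intervalIntegral.integral_eq_sub_of_hasDeriv_right_of_le hab rho_cont
      (fun x hx => (rho_deriv ha hb x hx).hasDerivWithinAt) hint]
  ring

theorem logistic_invariant_density (c d : ℝ) (hc : 0 ≤ c) (hcd : c ≤ d) (hd : d ≤ 1) :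
    ∫ x in ((fun x : ℝ => 4 * x * (1 - x)) ⁻¹' Set.Icc c d ∩ Set.Icc 0 1),
        1 / (Real.pi * Real.sqrt (x * (1 - x))) =
      ∫ x in Set.Icc c d, 1 / (Real.pi * Real.sqrt (x * (1 - x))) := by
  set s := Real.sqrt (1 - c) with hs_def
  set t := Real.sqrt (1 - d) with ht_def
  have hs0 : 0 ≤ s := Real.sqrt_nonneg _
  have ht0 : 0 ≤ t := Real.sqrt_nonneg _
  have hs2 : s ^ 2 = 1 - c := Real.sq_sqrt (by linarith)
  have ht2 : t ^ 2 = 1 - d := Real.sq_sqrt (by linarith)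
  have hts : t ≤ s := Real.sqrt_le_sqrt (by linarith)
  have hs1 : s ≤ 1 := by nlinarith
  have ht1 : t ≤ 1 := le_trans hts hs1
  have hset : ((fun x : ℝ => 4 * x * (1 - x)) ⁻¹' Set.Icc c d ∩ Set.Icc 0 1) =
      Set.Icc ((1 - s)/2) ((1 - t)/2) ∪ Set.Icc ((1 + t)/2) ((1 + s)/2) := by
    ext x
    simp only [Set.mem_inter_iff, Set.mem_preimage, Set.mem_Icc, Set.mem_union]
    constructor
    · rintro ⟨⟨h1, h2⟩, h3, h4⟩
      have hA : (2 * x - 1) ^ 2 ≤ s ^ 2 := by nlinarith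
      have hB : t ^ 2 ≤ (2 * x - 1) ^ 2 := by nlinarith
      rcases le_or_gt (2 * x - 1) 0 with h | h
      · exact Or.inl ⟨by nlinarith, by nlinarith⟩
      · exact Or.inr ⟨by nlinarith, by nlinarith⟩
    · rintro (⟨h1, h2⟩ | ⟨h1, h2⟩)
      · exact ⟨⟨by nlinarith, by nlinarith⟩, by nlinarith, by nlinarith⟩
      · exact ⟨⟨by nlinarith, by nlinarith⟩, by nlinarith, by nlinarith⟩
  rw [hset]
  have hdisj : AEDisjoint volume (Set.Icc ((1 - s)/2) ((1 - t)/2))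
      (Set.Icc ((1 + t)/2) ((1 + s)/2)) := by
    unfold AEDisjoint
    rw [Set.Icc_inter_Icc]
    refine le_antisymm ?_ (by positivity)
    calc volume (Set.Icc (max ((1-s)/2) ((1+t)/2)) (min ((1-t)/2) ((1+s)/2)))
        ≤ volume (Set.Icc ((1+t)/2) ((1-t)/2)) := by
          apply measure_mono
          exact Set.Icc_subset_Icc (le_max_right _ _) (min_le_left _ _)
      _ = 0 := by
          rw [Real.volume_Icc]
          simp only [ENNReal.ofReal_eq_zero]
          linarith
  have hi1 : IntegrableOn (fun x => 1 / (Real.pi * Real.sqrt (x * (1 - x))))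
      (Set.Icc ((1 - s)/2) ((1 - t)/2)) volume :=
    rho_integrableOn (by linarith) (by linarith) (by linarith)
  have hi2 : IntegrableOn (fun x => 1 / (Real.pi * Real.sqrt (x * (1 - x))))
      (Set.Icc ((1 + t)/2) ((1 + s)/2)) volume :=
    rho_integrableOn (by linarith) (by linarith) (by linarith)
  rw [MeasureTheory.integral_union_ae hdisj measurableSet_Icc.nullMeasurableSet hi1 hi2,
    icc_integral (by linarith) (by linarith) (by linarith),
    icc_integral (by linarith) (by linarith) (by linarith),
    icc_integral hc hcd hd]
  have e1 : 2 * ((1 - t)/2) - 1 = -t := by ring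
  have e2 : 2 * ((1 - s)/2) - 1 = -s := by ring
  have e3 : 2 * ((1 + s)/2) - 1 = s := by ring
  have e4 : 2 * ((1 + t)/2) - 1 = t := by ring
  have e5 : 2 * d - 1 = 1 - 2 * t ^ 2 := by rw [ht2]; ring
  have e6 : 2 * c - 1 = 1 - 2 * s ^ 2 := by rw [hs2]; ring
  rw [e1, e2, e3, e4, e5, e6, Real.arcsin_neg, Real.arcsin_neg,
    arcsin_one_sub_two_sq ht0 ht1, arcsin_one_sub_two_sq hs0 hs1]
  ring
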